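/- If for each i the random variables Z_i = (Y_{i0}, Y_{i1}, D_i, X_i) are i.i.d., the propensity score model is correct, the overlap condition holds, and E[Y_0(1)] = E[Y_0(0)] (pre-intervention mean equality), then the inverse propensity weighted difference-in-difference estimator τ̂_IPWDID = (1/n)Σ_i [D_i Y_{i1}/π(X_i) - (1-D_i)Y_{i1}/(1-π(X_i))] - (1/n)Σ_i [D_i Y_{i0}/π(X_i) - (1-D_i)Y_{i0}/(1-π(X_i))] converges almost surely to the average treatment effect τ_0 = E[Y_1(1)] - E[Y_1(0)] as n → ∞. -/

import Mathlib

open MeasureTheory ProbabilityTheory Filter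

set_option maxHeartbeats 1000000
set_option synthInstance.maxHeartbeats 400000
open scoped ENNReal Topology

private lemma condexp_indicator_mul_aux {Ω : Type*} {m : MeasurableSpace Ω} {mΩ : MeasurableSpace Ω}
    (hm : m ≤ mΩ) (μ : Measure Ω) [IsProbabilityMeasure μ]
    {Z : Ω → ℝ} (hZ : Measurable Z) (hZint : Integrable Z μ)
    {s : Set Ω} (hs : MeasurableSet s)
    (hcond : ∀ B : Set ℝ, MeasurableSet B →
      (μ⟦Z ⁻¹' B ∩ s|m⟧) =ᵐ[μ] fun ω => (μ⟦Z ⁻¹' B|m⟧) ω * (μ⟦s|m⟧) ω) :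
    μ[s.indicator Z|m] =ᵐ[μ] fun ω => (μ⟦s|m⟧) ω * (μ[Z|m]) ω := by
  set ν := μ.map Z with hν
  have hZae : AEMeasurable Z μ := hZ.aemeasurable
  set g : Ω → ℝ := μ⟦s|m⟧ with hg
  have hg_sm : StronglyMeasurable[m] g := stronglyMeasurable_condExp
  have hg0 : 0 ≤ᵐ[μ] g := condExp_nonneg (by
    refine Filter.Eventually.of_forall fun ω => ?_
    by_cases hω : ω ∈ s <;> simp [Set.indicator, hω])
  have hg1 : g ≤ᵐ[μ] fun _ => (1 : ℝ) := by
    have h := condExp_mono (μ := μ) (m := m)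
      (f := s.indicator fun _ => (1:ℝ)) (g := fun _ => (1:ℝ))
      ((integrable_const (1:ℝ)).indicator hs) (integrable_const 1)
      (Filter.Eventually.of_forall fun ω => by
        by_cases hω : ω ∈ s <;> simp [Set.indicator, hω])
    calc g ≤ᵐ[μ] μ[fun _ => (1:ℝ)|m] := h
    _ =ᵐ[μ] fun _ => (1:ℝ) := Filter.EventuallyEq.of_eq (condExp_const hm (1:ℝ))
  have hgbd : ∀ᵐ ω ∂μ, |g ω| ≤ 1 := by
    filter_upwards [hg0, hg1] with ω h0 h1
    rw [abs_of_nonneg h0]; exact h1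
  -- the property we prove by induction on integrable functions over ν
  have key : ∀ ⦃φ : ℝ → ℝ⦄, Integrable φ ν →
      μ[s.indicator (φ ∘ Z)|m] =ᵐ[μ] fun ω => g ω * (μ[φ ∘ Z|m]) ω := by
    refine Integrable.induction (μ := ν)
      (P := fun φ => μ[s.indicator (φ ∘ Z)|m] =ᵐ[μ] fun ω => g ω * (μ[φ ∘ Z|m]) ω)
      ?_ ?_ ?_ ?_
    · -- indicator case
      intro c B hB _
      have h1 : s.indicator ((B.indicator fun _ => c) ∘ Z)
          = c • (Z ⁻¹' B ∩ s).indicator (fun _ => (1:ℝ)) := by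
        funext ω
        by_cases hωs : ω ∈ s <;> by_cases hωB : Z ω ∈ B <;>
          simp [Set.indicator, hωs, hωB, Function.comp]
      have h2 : (B.indicator fun _ => c) ∘ Z
          = c • (Z ⁻¹' B).indicator (fun _ => (1:ℝ)) := by
        funext ω
        by_cases hωB : Z ω ∈ B <;> simp [Set.indicator, hωB, Function.comp]
      rw [h1, h2]
      have e1 := condExp_smul (μ := μ) (m := m) c ((Z ⁻¹' B ∩ s).indicator fun _ => (1:ℝ))
      have e2 := condExp_smul (μ := μ) (m := m) c ((Z ⁻¹' B).indicator fun _ => (1:ℝ))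
      have e3 := hcond B hB
      filter_upwards [e1, e2, e3] with ω h1' h2' h3'
      simp only [Pi.smul_apply, smul_eq_mul] at h1' h2' ⊢
      rw [h1', h2', h3']; ring
    · -- additivity
      intro φ ψ _ hφi hψi hPφ hPψ
      have hφZ : Integrable (φ ∘ Z) μ := hφi.comp_aemeasurable hZae
      have hψZ : Integrable (ψ ∘ Z) μ := hψi.comp_aemeasurable hZae
      have hsum1 : s.indicator ((φ + ψ) ∘ Z)
          = s.indicator (φ ∘ Z) + s.indicator (ψ ∘ Z) := by
        funext ω; by_cases hω : ω ∈ s <;> simp [Set.indicator, hω, Function.comp]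
      have hsum2 : (φ + ψ) ∘ Z = φ ∘ Z + ψ ∘ Z := rfl
      rw [hsum1, hsum2]
      have e1 := condExp_add (μ := μ) (m := m) (hφZ.indicator hs) (hψZ.indicator hs)
      have e2 := condExp_add (μ := μ) (m := m) hφZ hψZ
      filter_upwards [e1, e2, hPφ, hPψ] with ω h1' h2' h3' h4'
      simp only [Pi.add_apply] at h1' h2' ⊢
      rw [h1', h2', h3', h4']; ring
    · -- closedness
      refine IsSeqClosed.isClosed ?_
      intro u f hu hf
      have hd : Tendsto (fun n => eLpNorm (⇑(u n) - ⇑f) 1 ν) atTop (𝓝 0) :=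
        (Lp.tendsto_Lp_iff_tendsto_eLpNorm' u f).mp hf
      set F : Ω → ℝ := (⇑f : ℝ → ℝ) ∘ Z with hF
      set Fn : ℕ → Ω → ℝ := fun n => (⇑(u n) : ℝ → ℝ) ∘ Z with hFn
      have hfint : Integrable (⇑f : ℝ → ℝ) ν := L1.integrable_coeFn f
      have hunint : ∀ n, Integrable (⇑(u n) : ℝ → ℝ) ν := fun n => L1.integrable_coeFn (u n)
      have hFint : Integrable F μ := hfint.comp_aemeasurable hZae
      have hFnint : ∀ n, Integrable (Fn n) μ := fun n => (hunint n).comp_aemeasurable hZae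
      have hδ : ∀ n, eLpNorm (⇑(u n) - ⇑f) 1 ν = eLpNorm (Fn n - F) 1 μ := by
        intro n
        have := eLpNorm_map_measure (μ := μ) (f := Z) (p := (1:ℝ≥0∞))
          (g := ⇑(u n) - ⇑f) (((hunint n).sub hfint).aestronglyMeasurable) hZae
        exact this
      -- the two condexp functions for the limit
      set L : Ω → ℝ := μ[s.indicator F|m] with hL
      set R : Ω → ℝ := fun ω => g ω * (μ[F|m]) ω with hR
      have hLsm : AEStronglyMeasurable L μ := by
        rw [hL]; exact (stronglyMeasurable_condExp.mono hm).aestronglyMeasurable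
      have hRsm : AEStronglyMeasurable R μ := by
        rw [hR]
        exact ((hg_sm.mono hm).mul (stronglyMeasurable_condExp.mono hm)).aestronglyMeasurable
      have hbound : ∀ n, eLpNorm (L - R) 1 μ ≤ 2 * eLpNorm (Fn n - F) 1 μ := by
        intro n
        set Ln : Ω → ℝ := μ[s.indicator (Fn n)|m] with hLn
        set Rn : Ω → ℝ := fun ω => g ω * (μ[Fn n|m]) ω with hRn
        have hLnsm : AEStronglyMeasurable Ln μ := by
          rw [hLn]; exact (stronglyMeasurable_condExp.mono hm).aestronglyMeasurable
        have h1 : eLpNorm (L - Ln) 1 μ ≤ eLpNorm (Fn n - F) 1 μ := by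
          have e1 : L - Ln =ᵐ[μ] μ[s.indicator F - s.indicator (Fn n)|m] :=
            (condExp_sub (hFint.indicator hs) ((hFnint n).indicator hs) m).symm
          calc eLpNorm (L - Ln) 1 μ
              = eLpNorm (μ[s.indicator F - s.indicator (Fn n)|m]) 1 μ := eLpNorm_congr_ae e1
            _ ≤ eLpNorm (s.indicator F - s.indicator (Fn n)) 1 μ :=
                eLpNorm_one_condExp_le_eLpNorm _
            _ ≤ eLpNorm (Fn n - F) 1 μ := by
                refine eLpNorm_mono_ae (Filter.Eventually.of_forall fun ω => ?_)
                by_cases hω : ω ∈ s <;>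
                  simp [Set.indicator, hω, Pi.sub_apply, abs_sub_comm, Real.norm_eq_abs,
                    abs_nonneg]
        have h2 : eLpNorm (Rn - R) 1 μ ≤ eLpNorm (Fn n - F) 1 μ := by
          have e1 : μ[Fn n|m] - μ[F|m] =ᵐ[μ] μ[Fn n - F|m] :=
            (condExp_sub (hFnint n) hFint m).symm
          calc eLpNorm (Rn - R) 1 μ
              ≤ eLpNorm (μ[Fn n|m] - μ[F|m]) 1 μ := by
                refine eLpNorm_mono_ae ?_
                filter_upwards [hgbd] with ω hb
                simp only [Pi.sub_apply, hRn, hR, Real.norm_eq_abs]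
                rw [← mul_sub, abs_mul]
                calc |g ω| * |(μ[Fn n|m]) ω - (μ[F|m]) ω|
                    ≤ 1 * |(μ[Fn n|m]) ω - (μ[F|m]) ω| := by
                      exact mul_le_mul_of_nonneg_right hb (abs_nonneg _)
                  _ = |(μ[Fn n|m]) ω - (μ[F|m]) ω| := one_mul _
            _ = eLpNorm (μ[Fn n - F|m]) 1 μ := eLpNorm_congr_ae e1
            _ ≤ eLpNorm (Fn n - F) 1 μ := eLpNorm_one_condExp_le_eLpNorm _
        have htri : eLpNorm (L - R) 1 μ ≤ eLpNorm (L - Ln) 1 μ + eLpNorm (Ln - R) 1 μ := by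
          rw [← sub_add_sub_cancel L Ln R]
          exact eLpNorm_add_le (hLsm.sub hLnsm) (hLnsm.sub hRsm) le_rfl
        have hun := hu n
        simp only [Set.mem_setOf_eq] at hun
        have hLnRn : eLpNorm (Ln - R) 1 μ = eLpNorm (Rn - R) 1 μ :=
          eLpNorm_congr_ae (hun.sub (Filter.EventuallyEq.refl _ R))
        calc eLpNorm (L - R) 1 μ ≤ eLpNorm (L - Ln) 1 μ + eLpNorm (Ln - R) 1 μ := htri
          _ = eLpNorm (L - Ln) 1 μ + eLpNorm (Rn - R) 1 μ := by rw [hLnRn]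
          _ ≤ eLpNorm (Fn n - F) 1 μ + eLpNorm (Fn n - F) 1 μ := add_le_add h1 h2
          _ = 2 * eLpNorm (Fn n - F) 1 μ := (two_mul _).symm
      have hzero : eLpNorm (L - R) 1 μ = 0 := by
        have htend : Tendsto (fun n => 2 * eLpNorm (Fn n - F) 1 μ) atTop (𝓝 0) := by
          have : Tendsto (fun n => eLpNorm (Fn n - F) 1 μ) atTop (𝓝 0) := by
            refine hd.congr fun n => ?_
            exact hδ n
          simpa using ENNReal.Tendsto.const_mul this (Or.inr ENNReal.ofNat_ne_top)
        have := ge_of_tendsto' htend (fun n => hbound n)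
        exact le_antisymm this zero_le
      have : L - R =ᵐ[μ] 0 := (eLpNorm_eq_zero_iff (hLsm.sub hRsm) one_ne_zero).mp hzero
      have hLR : L =ᵐ[μ] R := by
        filter_upwards [this] with ω hω
        have : L ω - R ω = 0 := hω
        linarith
      exact hLR
    · -- ae congruence
      intro φ ψ hφψ hφi hP
      have hcomp : φ ∘ Z =ᵐ[μ] ψ ∘ Z := ae_eq_comp hZae hφψ
      have hind : s.indicator (φ ∘ Z) =ᵐ[μ] s.indicator (ψ ∘ Z) := by
        filter_upwards [hcomp] with ω hω
        simp only [Function.comp_apply] at hω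
        by_cases hωs : ω ∈ s <;> simp [Set.indicator, hωs, hω]
      calc μ[s.indicator (ψ ∘ Z)|m] =ᵐ[μ] μ[s.indicator (φ ∘ Z)|m] :=
            condExp_congr_ae hind.symm
        _ =ᵐ[μ] fun ω => g ω * (μ[φ ∘ Z|m]) ω := hP
        _ =ᵐ[μ] fun ω => g ω * (μ[ψ ∘ Z|m]) ω := by
            filter_upwards [condExp_congr_ae (μ := μ) (m := m) hcomp] with ω hω
            rw [hω]
  have hid : Integrable (id : ℝ → ℝ) ν := by
    rw [integrable_map_measure aestronglyMeasurable_id hZae]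
    simpa [Function.comp] using hZint
  have := key hid
  simpa [Function.comp] using this

private lemma integral_ipw_eq {Ω 𝒳 : Type*} [mΩ : MeasurableSpace Ω] [StandardBorelSpace Ω]
    [MeasurableSpace 𝒳] (μ : Measure Ω) [IsProbabilityMeasure μ]
    (X : Ω → 𝒳) (hX : Measurable X) (D Z : Ω → ℝ) (hD : Measurable D)
    (hDbin : ∀ ω, D ω = 0 ∨ D ω = 1) (hZ : Measurable Z) (hZint : Integrable Z μ)
    (p : Ω → ℝ) (hp : Measurable[MeasurableSpace.comap X inferInstance] p)
    (hp0 : ∀ ω, 0 < p ω)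
    (hpcorrect : p =ᵐ[μ] μ[D|MeasurableSpace.comap X inferInstance])
    (hci : CondIndepFun (MeasurableSpace.comap X inferInstance) hX.comap_le Z D μ)
    (hint2 : Integrable (fun ω => D ω * Z ω / p ω) μ) :
    ∫ ω, D ω * Z ω / p ω ∂μ = ∫ ω, Z ω ∂μ := by
  set m : MeasurableSpace Ω := MeasurableSpace.comap X inferInstance with hmdef
  have hm : m ≤ mΩ := hX.comap_le
  set s : Set Ω := D ⁻¹' {1} with hsdef
  have hs : MeasurableSet[mΩ] s := hD (measurableSet_singleton 1)
  have hDind : D = s.indicator (fun _ => (1:ℝ)) := by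
    funext ω
    rcases hDbin ω with h | h <;>
      simp [Set.indicator, hsdef, Set.mem_preimage, h]
  have hcond : ∀ B : Set ℝ, MeasurableSet B →
      (μ⟦Z ⁻¹' B ∩ s|m⟧) =ᵐ[μ] fun ω => (μ⟦Z ⁻¹' B|m⟧) ω * (μ⟦s|m⟧) ω := by
    have h := (condIndepFun_iff_condExp_inter_preimage_eq_mul (hm' := hm) hZ hD).mp hci
    exact fun B hB => h B {1} hB (measurableSet_singleton 1)
  have hmain := condexp_indicator_mul_aux hm μ hZ hZint hs hcond
  -- μ⟦s|m⟧ =ᵐ p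
  have h1 : (μ⟦s|m⟧) =ᵐ[μ] p := by
    have : (μ⟦s|m⟧) = μ[D|m] := by rw [hDind]
    rw [this]
    exact hpcorrect.symm
  -- Z * D = s.indicator Z
  have hZD : (fun ω => Z ω * D ω) = s.indicator Z := by
    funext ω
    rcases hDbin ω with h | h <;>
      simp [Set.indicator, hsdef, Set.mem_preimage, h]
  have hZDint : Integrable (fun ω => Z ω * D ω) μ := by
    refine hZint.abs.mono' ((hZ.mul hD).aestronglyMeasurable) ?_
    refine Filter.Eventually.of_forall fun ω => ?_
    rcases hDbin ω with h | h <;> simp [h, abs_nonneg]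
  set W : Ω → ℝ := fun ω => (p ω)⁻¹ with hWdef
  have hWsm : StronglyMeasurable[m] W := (hp.inv).stronglyMeasurable
  have hfun : (fun ω => D ω * Z ω / p ω) = fun ω => W ω * (Z ω * D ω) := by
    funext ω
    rw [hWdef, div_eq_mul_inv]
    ring
  have hWZDint : Integrable (fun ω => W ω * (Z ω * D ω)) μ := by rw [← hfun]; exact hint2
  have hpull : μ[(fun ω => W ω * (Z ω * D ω))|m]
      =ᵐ[μ] fun ω => W ω * (μ[fun ω => Z ω * D ω|m]) ω :=
    condExp_mul_of_stronglyMeasurable_left hWsm hWZDint hZDint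
  calc ∫ ω, D ω * Z ω / p ω ∂μ = ∫ ω, W ω * (Z ω * D ω) ∂μ := by rw [hfun]
    _ = ∫ ω, (μ[fun ω => W ω * (Z ω * D ω)|m]) ω ∂μ := (integral_condExp hm).symm
    _ = ∫ ω, (μ[Z|m]) ω ∂μ := by
        refine integral_congr_ae ?_
        have h2 : μ[fun ω => Z ω * D ω|m] =ᵐ[μ] fun ω => (μ⟦s|m⟧) ω * (μ[Z|m]) ω := by
          rw [hZD]; exact hmain
        filter_upwards [hpull, h2, h1] with ω e1 e2 e3
        rw [e1, e2, e3]
        rw [hWdef]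
        field_simp [(hp0 ω).ne']
    _ = ∫ ω, Z ω ∂μ := integral_condExp hm

/-- Consistency of the IPW difference-in-difference estimator of the ATE:
with i.i.d. units, a correctly specified propensity score, overlap,
unconfoundedness and pre-intervention mean equality `E[Y₀(1)] = E[Y₀(0)]`,
the estimator `τ̂_IPWDID` converges almost surely to
`τ₀ = E[Y₁(1)] - E[Y₁(0)]`. -/
theorem ipwdid_consistent_ate
    {Ω 𝒳 : Type*} [MeasurableSpace Ω] [StandardBorelSpace Ω] [MeasurableSpace 𝒳]
    (μ : Measure Ω) [IsProbabilityMeasure μ]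
    -- potential outcomes (pre and post period, control and treated versions),
    -- treatment and covariate, for each unit i
    (Pre0 Pre1 Post0 Post1 : ℕ → Ω → ℝ) (D : ℕ → Ω → ℝ) (X : ℕ → Ω → 𝒳)
    (hPre0 : ∀ i, Measurable (Pre0 i)) (hPre1 : ∀ i, Measurable (Pre1 i))
    (hPost0 : ∀ i, Measurable (Post0 i)) (hPost1 : ∀ i, Measurable (Post1 i))
    (hD : ∀ i, Measurable (D i)) (hX : ∀ i, Measurable (X i))
    (hDbin : ∀ i ω, D i ω = 0 ∨ D i ω = 1)
    -- observed outcomes: no treatment at time 0, consistency at time 1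
    (Ypre Ypost : ℕ → Ω → ℝ)
    (hYpre : ∀ i ω, Ypre i ω = Pre0 i ω)
    (hYpost : ∀ i ω, Ypost i ω = D i ω * Post1 i ω + (1 - D i ω) * Post0 i ω)
    -- known (correct) propensity score with overlap
    (π : 𝒳 → ℝ) (hπm : Measurable π) (hπ01 : ∀ x, 0 < π x ∧ π x < 1)
    (hπcorrect : ∀ i, (fun ω => π (X i ω))
      =ᵐ[μ] μ[D i | MeasurableSpace.comap (X i) inferInstance])
    -- unconfoundedness for each unit
    (hunconf : ∀ i, CondIndepFun (MeasurableSpace.comap (X i) inferInstance)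
      (hX i).comap_le
      (fun ω => (Pre0 i ω, Pre1 i ω, Post0 i ω, Post1 i ω)) (D i) μ)
    -- i.i.d. units
    (hindep : iIndepFun
      (fun i ω => (Pre0 i ω, Pre1 i ω, Post0 i ω, Post1 i ω, D i ω, X i ω)) μ)
    (hident : ∀ i, IdentDistrib
      (fun ω => (Pre0 i ω, Pre1 i ω, Post0 i ω, Post1 i ω, D i ω, X i ω))
      (fun ω => (Pre0 0 ω, Pre1 0 ω, Post0 0 ω, Post1 0 ω, D 0 ω, X 0 ω)) μ μ)
    -- integrability of the weighted terms
    (hint : ∀ i t, Integrable (fun ω =>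
      D i ω * (if t = 1 then Ypost i ω else Ypre i ω) / π (X i ω)
      - (1 - D i ω) * (if t = 1 then Ypost i ω else Ypre i ω) / (1 - π (X i ω))) μ)
    (hPreint : ∀ i, Integrable (Pre0 i) μ ∧ Integrable (Pre1 i) μ)
    (hPostint : ∀ i, Integrable (Post0 i) μ ∧ Integrable (Post1 i) μ)
    -- pre-intervention mean equality
    (hpre_eq : ∫ ω, Pre1 0 ω ∂μ = ∫ ω, Pre0 0 ω ∂μ) :
    ∀ᵐ ω ∂μ, Tendsto (fun n : ℕ =>
      (1 / (n : ℝ)) * ∑ i ∈ Finset.range n,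
        (D i ω * Ypost i ω / π (X i ω)
          - (1 - D i ω) * Ypost i ω / (1 - π (X i ω)))
      - (1 / (n : ℝ)) * ∑ i ∈ Finset.range n,
        (D i ω * Ypre i ω / π (X i ω)
          - (1 - D i ω) * Ypre i ω / (1 - π (X i ω))))
      atTop (nhds (∫ ω, Post1 0 ω ∂μ - ∫ ω, Post0 0 ω ∂μ)) := by
  classical
  set T : ℕ → Ω → ℝ × ℝ × ℝ × ℝ × ℝ × 𝒳 :=
    fun i ω => (Pre0 i ω, Pre1 i ω, Post0 i ω, Post1 i ω, D i ω, X i ω) with hT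
  have hTm : ∀ i, Measurable (T i) := fun i =>
    (hPre0 i).prodMk ((hPre1 i).prodMk ((hPost0 i).prodMk
      ((hPost1 i).prodMk ((hD i).prodMk (hX i)))))
  -- projections on the product type
  have ma : Measurable fun q : ℝ × ℝ × ℝ × ℝ × ℝ × 𝒳 => q.1 := measurable_fst
  have mc : Measurable fun q : ℝ × ℝ × ℝ × ℝ × ℝ × 𝒳 => q.2.2.1 := measurable_snd.snd.fst
  have md : Measurable fun q : ℝ × ℝ × ℝ × ℝ × ℝ × 𝒳 => q.2.2.2.1 := measurable_snd.snd.snd.fst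
  have me : Measurable fun q : ℝ × ℝ × ℝ × ℝ × ℝ × 𝒳 => q.2.2.2.2.1 :=
    measurable_snd.snd.snd.snd.fst
  have mx : Measurable fun q : ℝ × ℝ × ℝ × ℝ × ℝ × 𝒳 => q.2.2.2.2.2 :=
    measurable_snd.snd.snd.snd.snd
  set F : ℝ × ℝ × ℝ × ℝ × ℝ × 𝒳 → ℝ := fun q =>
    q.2.2.2.2.1 * (q.2.2.2.2.1 * q.2.2.2.1 + (1 - q.2.2.2.2.1) * q.2.2.1) / π q.2.2.2.2.2
    - (1 - q.2.2.2.2.1) * (q.2.2.2.2.1 * q.2.2.2.1 + (1 - q.2.2.2.2.1) * q.2.2.1)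
      / (1 - π q.2.2.2.2.2) with hF
  set G : ℝ × ℝ × ℝ × ℝ × ℝ × 𝒳 → ℝ := fun q =>
    q.2.2.2.2.1 * q.1 / π q.2.2.2.2.2 - (1 - q.2.2.2.2.1) * q.1 / (1 - π q.2.2.2.2.2) with hG
  have hYq : Measurable fun q : ℝ × ℝ × ℝ × ℝ × ℝ × 𝒳 =>
      q.2.2.2.2.1 * q.2.2.2.1 + (1 - q.2.2.2.2.1) * q.2.2.1 :=
    (me.mul md).add ((measurable_const.sub me).mul mc)
  have hFm : Measurable F := ((me.mul hYq).div (hπm.comp mx)).sub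
    (((measurable_const.sub me).mul hYq).div (measurable_const.sub (hπm.comp mx)))
  have hGm : Measurable G := ((me.mul ma).div (hπm.comp mx)).sub
    (((measurable_const.sub me).mul ma).div (measurable_const.sub (hπm.comp mx)))
  set f : ℕ → Ω → ℝ := fun i ω =>
    D i ω * Ypost i ω / π (X i ω) - (1 - D i ω) * Ypost i ω / (1 - π (X i ω)) with hf
  set g : ℕ → Ω → ℝ := fun i ω =>
    D i ω * Ypre i ω / π (X i ω) - (1 - D i ω) * Ypre i ω / (1 - π (X i ω)) with hg
  have hfF : ∀ i, f i = F ∘ T i := by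
    intro i; funext ω
    simp only [hf, hF, hT, Function.comp_apply, hYpost i ω]
  have hgG : ∀ i, g i = G ∘ T i := by
    intro i; funext ω
    simp only [hg, hG, hT, Function.comp_apply, hYpre i ω]
  have hintf : Integrable (f 0) μ := by simpa [hf] using hint 0 1
  have hintg : Integrable (g 0) μ := by simpa [hg] using hint 0 0
  have hpairf : Pairwise (Function.onFun (IndepFun · · μ) f) := by
    intro i j hij
    have h := (hindep.indepFun hij).comp hFm hFm
    simpa [Function.onFun, hfF] using h
  have hpairg : Pairwise (Function.onFun (IndepFun · · μ) g) := by
    intro i j hij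
    have h := (hindep.indepFun hij).comp hGm hGm
    simpa [Function.onFun, hgG] using h
  have hidf : ∀ i, IdentDistrib (f i) (f 0) μ μ := by
    intro i
    rw [hfF i, hfF 0]
    exact (hident i).comp hFm
  have hidg : ∀ i, IdentDistrib (g i) (g 0) μ μ := by
    intro i
    rw [hgG i, hgG 0]
    exact (hident i).comp hGm
  have hslln_f := strong_law_ae_real f hintf hpairf hidf
  have hslln_g := strong_law_ae_real g hintg hpairg hidg
  -- identification of the limits
  have hXm : @Measurable Ω 𝒳 (MeasurableSpace.comap (X 0) inferInstance) _ (X 0) :=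
    Measurable.of_comap_le le_rfl
  have hD0int : Integrable (D 0) μ := by
    refine (integrable_const (1:ℝ)).mono' (hD 0).aestronglyMeasurable ?_
    refine Filter.Eventually.of_forall fun ω => ?_
    rcases hDbin 0 ω with h | h <;> norm_num [h]
  have hYpost0m : Measurable (Ypost 0) := by
    rw [show Ypost 0 = fun ω => D 0 ω * Post1 0 ω + (1 - D 0 ω) * Post0 0 ω from
      funext (hYpost 0)]
    exact ((hD 0).mul (hPost1 0)).add ((measurable_const.sub (hD 0)).mul (hPost0 0))
  have hYpre0m : Measurable (Ypre 0) := by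
    rw [show Ypre 0 = Pre0 0 from funext (hYpre 0)]
    exact hPre0 0
  -- integrability of the four pieces
  have hAm : Measurable fun ω => D 0 ω * Ypost 0 ω / π (X 0 ω) :=
    ((hD 0).mul hYpost0m).div (hπm.comp (hX 0))
  have hBm : Measurable fun ω => (1 - D 0 ω) * Ypost 0 ω / (1 - π (X 0 ω)) :=
    ((measurable_const.sub (hD 0)).mul hYpost0m).div (measurable_const.sub (hπm.comp (hX 0)))
  have hA'm : Measurable fun ω => D 0 ω * Ypre 0 ω / π (X 0 ω) :=
    ((hD 0).mul hYpre0m).div (hπm.comp (hX 0))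
  have hB'm : Measurable fun ω => (1 - D 0 ω) * Ypre 0 ω / (1 - π (X 0 ω)) :=
    ((measurable_const.sub (hD 0)).mul hYpre0m).div (measurable_const.sub (hπm.comp (hX 0)))
  have hAint : Integrable (fun ω => D 0 ω * Ypost 0 ω / π (X 0 ω)) μ := by
    refine hintf.norm.mono' hAm.aestronglyMeasurable ?_
    refine Filter.Eventually.of_forall fun ω => ?_
    rcases hDbin 0 ω with h | h
    · simp [h]
    · have hB0 : (1 - D 0 ω) * Ypost 0 ω / (1 - π (X 0 ω)) = 0 := by rw [h]; simp
      simp [hf, hB0, h]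
  have hBint : Integrable (fun ω => (1 - D 0 ω) * Ypost 0 ω / (1 - π (X 0 ω))) μ := by
    refine hintf.norm.mono' hBm.aestronglyMeasurable ?_
    refine Filter.Eventually.of_forall fun ω => ?_
    rcases hDbin 0 ω with h | h
    · have hA0 : D 0 ω * Ypost 0 ω / π (X 0 ω) = 0 := by rw [h]; simp
      simp [hf, hA0, h, norm_neg]
    · simp [h]
  have hA'int : Integrable (fun ω => D 0 ω * Ypre 0 ω / π (X 0 ω)) μ := by
    refine hintg.norm.mono' hA'm.aestronglyMeasurable ?_
    refine Filter.Eventually.of_forall fun ω => ?_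
    rcases hDbin 0 ω with h | h
    · simp [h]
    · have hB0 : (1 - D 0 ω) * Ypre 0 ω / (1 - π (X 0 ω)) = 0 := by rw [h]; simp
      simp [hg, hB0, h]
  have hB'int : Integrable (fun ω => (1 - D 0 ω) * Ypre 0 ω / (1 - π (X 0 ω))) μ := by
    refine hintg.norm.mono' hB'm.aestronglyMeasurable ?_
    refine Filter.Eventually.of_forall fun ω => ?_
    rcases hDbin 0 ω with h | h
    · have hA0 : D 0 ω * Ypre 0 ω / π (X 0 ω) = 0 := by rw [h]; simp
      simp [hg, hA0, h, norm_neg]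
    · simp [h]
  -- pointwise rewritings
  have hAeq : (fun ω => D 0 ω * Ypost 0 ω / π (X 0 ω))
      = fun ω => D 0 ω * Post1 0 ω / π (X 0 ω) := by
    funext ω
    rcases hDbin 0 ω with h | h <;> simp [hYpost 0 ω, h]
  have hBeq : (fun ω => (1 - D 0 ω) * Ypost 0 ω / (1 - π (X 0 ω)))
      = fun ω => (1 - D 0 ω) * Post0 0 ω / (1 - π (X 0 ω)) := by
    funext ω
    rcases hDbin 0 ω with h | h <;> simp [hYpost 0 ω, h]
  have hA'eq : (fun ω => D 0 ω * Ypre 0 ω / π (X 0 ω))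
      = fun ω => D 0 ω * Pre0 0 ω / π (X 0 ω) := by
    funext ω; rw [hYpre 0 ω]
  have hB'eq : (fun ω => (1 - D 0 ω) * Ypre 0 ω / (1 - π (X 0 ω)))
      = fun ω => (1 - D 0 ω) * Pre0 0 ω / (1 - π (X 0 ω)) := by
    funext ω; rw [hYpre 0 ω]
  -- conditional independences
  have hciPost1 : CondIndepFun (MeasurableSpace.comap (X 0) inferInstance)
      (hX 0).comap_le (Post1 0) (D 0) μ :=
    (hunconf 0).comp measurable_snd.snd.snd measurable_id
  have hciPost0 : CondIndepFun (MeasurableSpace.comap (X 0) inferInstance)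
      (hX 0).comap_le (Post0 0) (fun ω => 1 - D 0 ω) μ :=
    (hunconf 0).comp measurable_snd.snd.fst (measurable_const.sub measurable_id)
  have hciPre0 : CondIndepFun (MeasurableSpace.comap (X 0) inferInstance)
      (hX 0).comap_le (Pre0 0) (D 0) μ :=
    (hunconf 0).comp measurable_fst measurable_id
  have hciPre0' : CondIndepFun (MeasurableSpace.comap (X 0) inferInstance)
      (hX 0).comap_le (Pre0 0) (fun ω => 1 - D 0 ω) μ :=
    (hunconf 0).comp measurable_fst (measurable_const.sub measurable_id)
  -- the complementary propensity is correct for 1 - D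
  have hcomp_correct : (fun ω => 1 - π (X 0 ω))
      =ᵐ[μ] μ[(fun ω => 1 - D 0 ω)|MeasurableSpace.comap (X 0) inferInstance] := by
    have hsub : (fun ω => (1:ℝ) - D 0 ω) = (fun _ : Ω => (1:ℝ)) - D 0 := rfl
    rw [hsub]
    have e := condExp_sub (μ := μ) (m := MeasurableSpace.comap (X 0) inferInstance)
      (integrable_const (1:ℝ)) hD0int
    have e2 : μ[(fun _ : Ω => (1:ℝ))|MeasurableSpace.comap (X 0) inferInstance]
        = fun _ => (1:ℝ) := condExp_const (hX 0).comap_le (1:ℝ)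
    filter_upwards [e.symm, hπcorrect 0] with ω h1 h2
    rw [← h1, Pi.sub_apply, e2]
    simp [h2]
  have hcomp_bin : ∀ ω, (1 - D 0 ω) = 0 ∨ (1 - D 0 ω) = 1 := by
    intro ω; rcases hDbin 0 ω with h | h <;> simp [h]
  -- the four integral identities
  have hIA : ∫ ω, D 0 ω * Post1 0 ω / π (X 0 ω) ∂μ = ∫ ω, Post1 0 ω ∂μ :=
    integral_ipw_eq μ (X 0) (hX 0) (D 0) (Post1 0) (hD 0) (hDbin 0) (hPost1 0)
      (hPostint 0).2 (fun ω => π (X 0 ω)) (hπm.comp hXm) (fun ω => (hπ01 (X 0 ω)).1)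
      (hπcorrect 0) hciPost1 (by rw [← hAeq]; exact hAint)
  have hIB : ∫ ω, (1 - D 0 ω) * Post0 0 ω / (1 - π (X 0 ω)) ∂μ = ∫ ω, Post0 0 ω ∂μ :=
    integral_ipw_eq μ (X 0) (hX 0) (fun ω => 1 - D 0 ω) (Post0 0)
      (measurable_const.sub (hD 0)) hcomp_bin (hPost0 0) (hPostint 0).1
      (fun ω => 1 - π (X 0 ω)) (measurable_const.sub (hπm.comp hXm))
      (fun ω => by show (0:ℝ) < 1 - π (X 0 ω); linarith [(hπ01 (X 0 ω)).2]) hcomp_correct hciPost0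
      (by rw [← hBeq]; exact hBint)
  have hIA' : ∫ ω, D 0 ω * Pre0 0 ω / π (X 0 ω) ∂μ = ∫ ω, Pre0 0 ω ∂μ :=
    integral_ipw_eq μ (X 0) (hX 0) (D 0) (Pre0 0) (hD 0) (hDbin 0) (hPre0 0)
      (hPreint 0).1 (fun ω => π (X 0 ω)) (hπm.comp hXm) (fun ω => (hπ01 (X 0 ω)).1)
      (hπcorrect 0) hciPre0 (by rw [← hA'eq]; exact hA'int)
  have hIB' : ∫ ω, (1 - D 0 ω) * Pre0 0 ω / (1 - π (X 0 ω)) ∂μ = ∫ ω, Pre0 0 ω ∂μ :=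
    integral_ipw_eq μ (X 0) (hX 0) (fun ω => 1 - D 0 ω) (Pre0 0)
      (measurable_const.sub (hD 0)) hcomp_bin (hPre0 0) (hPreint 0).1
      (fun ω => 1 - π (X 0 ω)) (measurable_const.sub (hπm.comp hXm))
      (fun ω => by show (0:ℝ) < 1 - π (X 0 ω); linarith [(hπ01 (X 0 ω)).2]) hcomp_correct hciPre0'
      (by rw [← hB'eq]; exact hB'int)
  -- expectations of f 0 and g 0
  have hEf : ∫ ω, f 0 ω ∂μ = ∫ ω, Post1 0 ω ∂μ - ∫ ω, Post0 0 ω ∂μ := by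
    have hsplit : ∫ ω, f 0 ω ∂μ
        = (∫ ω, D 0 ω * Ypost 0 ω / π (X 0 ω) ∂μ)
          - ∫ ω, (1 - D 0 ω) * Ypost 0 ω / (1 - π (X 0 ω)) ∂μ := by
      simp only [hf]
      exact integral_sub hAint hBint
    rw [hsplit, hAeq, hBeq, hIA, hIB]
  have hEg : ∫ ω, g 0 ω ∂μ = 0 := by
    have hsplit : ∫ ω, g 0 ω ∂μ
        = (∫ ω, D 0 ω * Ypre 0 ω / π (X 0 ω) ∂μ)
          - ∫ ω, (1 - D 0 ω) * Ypre 0 ω / (1 - π (X 0 ω)) ∂μ := by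
      simp only [hg]
      exact integral_sub hA'int hB'int
    rw [hsplit, hA'eq, hB'eq, hIA', hIB', sub_self]
  -- conclusion
  filter_upwards [hslln_f, hslln_g] with ω h1 h2
  have h3 := h1.sub h2
  rw [hEf, hEg, sub_zero] at h3
  refine h3.congr fun n => ?_
  simp only [hf, hg]
  ring
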